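/- Let Γ be a connected cubic graph admitting a partition of its edge set into a 2-factor C and a 1-factor I such that |C| ≥ 3 and the quotient graph Γ_C with respect to C is a cycle. Suppose there exists a vertex-transitive subgroup G ≤ Aut(Γ) preserving this partition. Then the permutation group induced by the action of G on the vertex set C of Γ_C is the dihedral group of order 2m, where m = |C|. -/

import Mathlib

namespace CubicFIG

open SimpleGraph

variable {V : Type*}

/-- `f` is an automorphism of the graph `Γ`. -/
def IsAut (Γ : SimpleGraph V) (f : Equiv.Perm V) : Prop :=
  ∀ u v : V, Γ.Adj (f u) (f v) ↔ Γ.Adj u v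

/-- `f` preserves (the edge set of) the subgraph `H` (e.g. a 2-factor). -/
def Preserves (H : SimpleGraph V) (f : Equiv.Perm V) : Prop :=
  ∀ u v : V, H.Adj u v → H.Adj (f u) (f v)

/-- `Γ` is vertex-transitive. -/
def IsVertexTransitive (Γ : SimpleGraph V) : Prop :=
  ∀ u v : V, ∃ f : Equiv.Perm V, IsAut Γ f ∧ f u = v

/-- `Γ` is cubic. -/
def IsCubic (Γ : SimpleGraph V) : Prop := ∀ v : V, (Γ.neighborSet v).ncard = 3

/-- The edge set of `Γ` is partitioned into the 2-factor `H` (a spanning 2-regular subgraph,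
whose cycles are the connected components of `H`) and a 1-factor (the remaining edges,
which form a perfect matching). -/
def FactorPartition (Γ H : SimpleGraph V) : Prop :=
  H ≤ Γ ∧ (∀ v : V, (H.neighborSet v).ncard = 2) ∧
    (∀ v : V, {w : V | Γ.Adj v w ∧ ¬ H.Adj v w}.ncard = 1)

/-- The quotient graph `Γ_C` of `Γ` with respect to the 2-factor `H`: its vertices are the
cycles of the 2-factor, i.e. the connected components of `H`, two of them being adjacent iff
some vertex of one is `Γ`-adjacent to some vertex of the other. -/
def quotientGraph (Γ H : SimpleGraph V) : SimpleGraph H.ConnectedComponent :=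
  SimpleGraph.fromRel fun c d =>
    ∃ u v : V, Γ.Adj u v ∧ H.connectedComponentMk u = c ∧ H.connectedComponentMk v = d

/-- A graph is a cycle iff it is finite, connected and 2-regular. -/
def IsCycleGraph {W : Type*} (G : SimpleGraph W) : Prop :=
  Finite W ∧ G.Connected ∧ ∀ w : W, (G.neighborSet w).ncard = 2

/-- `Γ` is of alternating cycle quotient type with respect to the 2-factor `H`:
the edge set of `Γ` is partitioned into the 2-factor `H` and a 1-factor, the quotient
graph is a cycle, and any two vertices adjacent along a common cycle of the 2-factor
have their outside neighbors in distinct cycles of the 2-factor. -/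
def AltCQT (Γ H : SimpleGraph V) : Prop :=
  IsCubic Γ ∧ FactorPartition Γ H ∧ IsCycleGraph (quotientGraph Γ H) ∧
  ∀ ⦃u v u' v' : V⦄, H.Adj u v → Γ.Adj u u' → ¬ H.Adj u u' → Γ.Adj v v' → ¬ H.Adj v v' →
    H.connectedComponentMk u' ≠ H.connectedComponentMk v'

/-- The relation giving the cycle ("non-link") edges of `X_a(m,n,S,ℓ)`:
`v_{i,j} ∼ v_{i,j+a_i}, v_{i,j+b_i}` for `j ≡ i (mod 2)`. -/
def XaCycleRel (m n : ℕ) (a b : ZMod m → ZMod n) (u v : ZMod m × ZMod n) : Prop :=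
  u.2.val % 2 = u.1.val % 2 ∧ u.1 = v.1 ∧ (v.2 = u.2 + a u.1 ∨ v.2 = u.2 + b u.1)

/-- The relation giving the "link" edges of `X_a(m,n,S,ℓ)`:
`v_{i,j} ∼ v_{i+1,j}` for `0 ≤ i ≤ m-2`, `j ≡ i (mod 2)`, and
`v_{m-1,j} ∼ v_{0,j+ℓ}` for `j ≡ m-1 (mod 2)`. -/
def XaLinkRel (m n : ℕ) (ℓ : ZMod n) (u v : ZMod m × ZMod n) : Prop :=
  (u.2.val % 2 = u.1.val % 2 ∧ u.1.val ≤ m - 2 ∧ v.1 = u.1 + 1 ∧ v.2 = u.2) ∨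
  (u.2.val % 2 = (m - 1) % 2 ∧ u.1 = ((m - 1 : ℕ) : ZMod m) ∧ v.1 = 0 ∧ v.2 = u.2 + ℓ)

/-- The graph `X_a(m,n,S,ℓ)` with signature `S = [{a 0, b 0},…,{a (m-1), b (m-1)}]`. -/
def XaGraph (m n : ℕ) (a b : ZMod m → ZMod n) (ℓ : ZMod n) : SimpleGraph (ZMod m × ZMod n) :=
  SimpleGraph.fromRel fun u v => XaCycleRel m n a b u v ∨ XaLinkRel m n ℓ u v

/-- The 2-factor of `X_a(m,n,S,ℓ)` consisting of the `m` cycles `C_i` induced on the sets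
`V_i` (its edges are the non-links). -/
def XaFactor (m n : ℕ) (a b : ZMod m → ZMod n) : SimpleGraph (ZMod m × ZMod n) :=
  SimpleGraph.fromRel (XaCycleRel m n a b)

/-- Admissibility of the parameters of `X_a(m,n,S,ℓ)`: `m ≥ 3`, `n ≥ 4` even, `ℓ` of the
same parity as `m`, `a 0 = 1`, `b 0 = -1`, and all the `a i, b i` distinct and odd with
`gcd(b i - a i, n) = 2`. -/
def Admissible (m n : ℕ) (a b : ZMod m → ZMod n) (ℓ : ZMod n) : Prop :=
  3 ≤ m ∧ 4 ≤ n ∧ n % 2 = 0 ∧ ℓ.val % 2 = m % 2 ∧ a 0 = 1 ∧ b 0 = -1 ∧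
    ∀ i : ZMod m, a i ≠ b i ∧ (a i).val % 2 = 1 ∧ (b i).val % 2 = 1 ∧
      Nat.gcd (b i - a i).val n = 2

/-- The honeycomb toroidal graph `HTG(m,n,ℓ)`: the graph `X_a(m,n,S,ℓ)` whose signature
consists of `m` copies of `{-1,1}`. -/
def HTG (m n : ℕ) (ℓ : ZMod n) : SimpleGraph (ZMod m × ZMod n) :=
  XaGraph m n (fun _ => 1) (fun _ => -1) ℓ

/-- The signature `[1,k,1,k,…,1,k]`. -/
def kSig (m n : ℕ) (k : ZMod n) : ZMod m → ZMod n :=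
  fun i => if i.val % 2 = 0 then 1 else k

/-- The graph `X_a(m,n,k,ℓ)`, i.e. `X_a(m,n,S,ℓ)` with signature `S = [1,k,1,k,…,1,k]`. -/
def XaK (m n : ℕ) (k ℓ : ZMod n) : SimpleGraph (ZMod m × ZMod n) :=
  XaGraph m n (kSig m n k) (fun i => -(kSig m n k i)) ℓ

/-- The 2-factor of `X_a(m,n,k,ℓ)` consisting of the `m` cycles `C_i`. -/
def XaKFactor (m n : ℕ) (k : ZMod n) : SimpleGraph (ZMod m × ZMod n) :=
  XaFactor m n (kSig m n k) (fun i => -(kSig m n k i))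

/-- Assumption A: `Γ = X_a(m,n,S,ℓ)` with `m ≥ 3`, `n ≥ 6` even, `ℓ` of the same parity as
`m`, signature `S = [k 0, …, k (m-1)]` (that is, `{a i, b i} = {k i, -(k i)}`) with `k 0 = 1`
and each `k i` coprime to `n`, admitting a vertex-transitive subgroup of `Aut(Γ)` preserving
the 2-factor consisting of the cycles `C_i`. -/
def AssumptionA (m n : ℕ) (k : ZMod m → ZMod n) (ℓ : ZMod n) : Prop :=
  3 ≤ m ∧ 6 ≤ n ∧ n % 2 = 0 ∧ ℓ.val % 2 = m % 2 ∧ k 0 = 1 ∧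
  (∀ i : ZMod m, Nat.Coprime (k i).val n) ∧
  ∃ G : Subgroup (Equiv.Perm (ZMod m × ZMod n)),
    (∀ g ∈ G, IsAut (XaGraph m n k (fun i => -(k i)) ℓ) g) ∧
    (∀ g ∈ G, Preserves (XaFactor m n k (fun i => -(k i))) g) ∧
    ∀ u v : ZMod m × ZMod n, ∃ g ∈ G, g u = v

/-- Condition (II): `m ≥ 4` and `n ≥ 6` even, `ℓ ∈ ℤ_n` even, `k ∈ ℤ_n` odd with
`gcd(k,n) = 1`, `2k ≠ ±2`, `2k² = ±2`, and (writing `n = 2n'`) either `ℓk = ±ℓ` and at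
least one of `k² = ±1` and `4 ∣ m` holds, or `ℓk = n' ± ℓ`, `m ≡ 2 (mod 4)` and
`k² = n' ± 1`. -/
def CondII (m n : ℕ) (k ℓ : ZMod n) : Prop :=
  4 ≤ m ∧ m % 2 = 0 ∧ 6 ≤ n ∧ n % 2 = 0 ∧ ℓ.val % 2 = 0 ∧ k.val % 2 = 1 ∧
  Nat.Coprime k.val n ∧ 2 * k ≠ 2 ∧ 2 * k ≠ -2 ∧ (2 * k ^ 2 = 2 ∨ 2 * k ^ 2 = -2) ∧
  (((ℓ * k = ℓ ∨ ℓ * k = -ℓ) ∧ ((k ^ 2 = 1 ∨ k ^ 2 = -1) ∨ m % 4 = 0)) ∨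
   ((ℓ * k = (↑(n / 2) : ZMod n) + ℓ ∨ ℓ * k = (↑(n / 2) : ZMod n) - ℓ) ∧ m % 4 = 2 ∧
     (k ^ 2 = (↑(n / 2) : ZMod n) + 1 ∨ k ^ 2 = (↑(n / 2) : ZMod n) - 1)))

/-- `Γ` (with distinguished 2-factor `H`, whose edges are the non-links) has a 10-cycle
whose code (the cyclic 0/1 sequence recording links (0) and non-links (1), up to rotation
and reflection) is given by `c`. -/
def HasTenCycleWithCode (Γ H : SimpleGraph V) (c : ZMod 10 → Prop) : Prop :=
  ∃ v : ZMod 10 → V, Function.Injective v ∧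
    ∀ j : ZMod 10, Γ.Adj (v j) (v (j + 1)) ∧ (H.Adj (v j) (v (j + 1)) ↔ c j)

/-- The code `1⁶01²0` of 10-cycles of type 2. -/
def type2Code : ZMod 10 → Prop := fun j => j.val ≠ 6 ∧ j.val ≠ 9

/-- The code `1³0101010` of 10-cycles of type 3. -/
def type3Code : ZMod 10 → Prop :=
  fun j => j.val = 0 ∨ j.val = 1 ∨ j.val = 2 ∨ j.val = 4 ∨ j.val = 6 ∨ j.val = 8

/-- `Γ` is 2-arc-regular: the automorphism group acts regularly on 2-arcs. -/
def TwoArcRegular (Γ : SimpleGraph V) : Prop :=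
  ∀ ⦃v0 v1 v2 w0 w1 w2 : V⦄, Γ.Adj v0 v1 → Γ.Adj v1 v2 → v0 ≠ v2 →
    Γ.Adj w0 w1 → Γ.Adj w1 w2 → w0 ≠ w2 →
    ∃! f : Equiv.Perm V, IsAut Γ f ∧ f v0 = w0 ∧ f v1 = w1 ∧ f v2 = w2

/- ### Auxiliary lemmas for `statement0` -/

lemma two_ne_zero_zmod {m : ℕ} (hm : 3 ≤ m) : (2 : ZMod m) ≠ 0 := by
  intro h2
  have : (m:ℤ) ∣ 2 := by
    have := (ZMod.natCast_eq_zero_iff 2 m).mp (by exact_mod_cast h2)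
    exact_mod_cast this
  have := Int.le_of_dvd (by norm_num) this
  omega

lemma deg2_unique {W : Type*} {G : SimpleGraph W} {w a b c : W}
    (hdeg : (G.neighborSet w).ncard = 2) (ha : G.Adj w a) (hb : G.Adj w b) (hc : G.Adj w c)
    (hab : a ≠ b) : c = a ∨ c = b := by
  by_contra hcon
  push_neg at hcon
  obtain ⟨x, y, hxy, hset⟩ := Set.ncard_eq_two.mp hdeg
  have hma : a ∈ ({x, y} : Set W) := hset ▸ ha
  have hmb : b ∈ ({x, y} : Set W) := hset ▸ hb
  have hmc : c ∈ ({x, y} : Set W) := hset ▸ hc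
  simp only [Set.mem_insert_iff, Set.mem_singleton_iff] at hma hmb hmc
  rcases hma with rfl|rfl <;> rcases hmb with rfl|rfl <;> rcases hmc with rfl|rfl <;> tauto

lemma cycle_labeling {W : Type*} (G : SimpleGraph W) (h : IsCycleGraph G)
    (hm : 3 ≤ Nat.card W) :
    ∃ e : ZMod (Nat.card W) ≃ W, ∀ x y, G.Adj (e x) (e y) ↔ (y = x + 1 ∨ x = y + 1) := by
  classical
  obtain ⟨hfin, hconn, hdeg⟩ := h
  haveI : Finite W := hfin
  set m := Nat.card W with hmdef
  haveI : NeZero m := ⟨by omega⟩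
  haveI : Fact (1 < m) := ⟨by omega⟩
  have hne : Nonempty W := Nat.card_pos_iff.mp (by omega) |>.1
  obtain ⟨w0⟩ := hne
  have hex : ∀ w : W, ∀ a : W, G.Adj w a → ∃ c, G.Adj w c ∧ c ≠ a := by
    intro w a ha
    obtain ⟨x, y, hxy, hset⟩ := Set.ncard_eq_two.mp (hdeg w)
    have hma : a ∈ ({x, y} : Set W) := hset ▸ ha
    have hx : G.Adj w x := by rw [← SimpleGraph.mem_neighborSet, hset]; simp
    have hy : G.Adj w y := by rw [← SimpleGraph.mem_neighborSet, hset]; simp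
    simp only [Set.mem_insert_iff, Set.mem_singleton_iff] at hma
    rcases hma with rfl|rfl
    · exact ⟨y, hy, hxy.symm⟩
    · exact ⟨x, hx, hxy⟩
  have hw0 : ∃ a, G.Adj w0 a := by
    obtain ⟨x, y, hxy, hset⟩ := Set.ncard_eq_two.mp (hdeg w0)
    exact ⟨x, by rw [← SimpleGraph.mem_neighborSet, hset]; simp⟩
  obtain ⟨w1, hw01⟩ := hw0
  let other : W → W → W := fun a b =>
    if h : ∃ c, G.Adj b c ∧ c ≠ a then h.choose else b
  have hother : ∀ a b, G.Adj b a → G.Adj b (other a b) ∧ other a b ≠ a := by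
    intro a b hba
    have he := hex b a hba
    simp only [other, dif_pos he]
    exact he.choose_spec
  let p : ℕ → W × W := fun k => Nat.rec (w0, w1) (fun _ q => (q.2, other q.1 q.2)) k
  let f : ℕ → W := fun k => (p k).1
  have hf1 : ∀ k, f (k+1) = (p k).2 := fun k => rfl
  have hf2 : ∀ k, f (k+2) = other (f k) (f (k+1)) := fun k => rfl
  have hadj : ∀ k, G.Adj (f k) (f (k+1)) ∧ f (k+2) ≠ f k := by
    intro k
    induction k with
    | zero =>
      exact ⟨hw01, (hother (f 0) (f 1) hw01.symm).2⟩
    | succ n ih =>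
      have h1 : G.Adj (f (n+1)) (f (n+2)) := (hother (f n) (f (n+1)) ih.1.symm).1
      exact ⟨h1, (hother (f (n+1)) (f (n+2)) h1.symm).2⟩
  have hadj' : ∀ k, G.Adj (f k) (f (k+1)) := fun k => (hadj k).1
  have hne2 : ∀ k, f (k+2) ≠ f k := fun k => (hadj k).2
  have hcoll : ∃ j, 0 < j ∧ ∃ i, i < j ∧ f i = f j := by
    have : ¬ Function.Injective f := fun hinj =>
      (Set.infinite_range_of_injective hinj) (Set.toFinite _)
    simp only [Function.Injective, not_forall] at this
    obtain ⟨a, b, hab, hne⟩ := this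
    rcases Nat.lt_or_ge a b with h | h
    · exact ⟨b, by omega, a, h, hab⟩
    · exact ⟨a, by omega, b, by omega, hab.symm⟩
  set J := Nat.find hcoll with hJdef
  obtain ⟨hJpos, i0, hi0J, hfi0⟩ := Nat.find_spec hcoll
  rw [← hJdef] at hJpos hi0J hfi0
  have hinjJ : ∀ a b, a < b → b < J → f a ≠ f b := by
    intro a b hab hbJ hfe
    exact Nat.find_min hcoll hbJ ⟨by omega, a, hab, hfe⟩
  have hi00 : i0 = 0 := by
    by_contra hi0
    have hi1 : 1 ≤ i0 := by omega
    have hiJ2 : i0 + 2 ≤ J := by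
      by_contra hcon
      have hJe : i0 + 1 = J := by omega
      have hA := hadj' i0
      rw [hJe, ← hfi0] at hA
      exact G.irrefl hA
    -- f (J-1) is a neighbor of f i0
    have hJ1 : J - 1 + 1 = J := by omega
    have hA1 : G.Adj (f i0) (f (J-1)) := by
      have := (hadj' (J-1)).symm
      rw [hJ1, ← hfi0] at this
      exact this
    have hA2 : G.Adj (f i0) (f (i0 - 1)) := by
      have := (hadj' (i0-1)).symm
      rw [show i0 - 1 + 1 = i0 by omega] at this
      exact this
    have hA3 : G.Adj (f i0) (f (i0 + 1)) := hadj' i0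
    have hd : f (i0 - 1) ≠ f (i0 + 1) := by
      have := hne2 (i0 - 1)
      rw [show i0 - 1 + 2 = i0 + 1 by omega] at this
      exact fun hh => this hh.symm
    rcases deg2_unique (hdeg (f i0)) hA2 hA3 hA1 hd with hc | hc
    · exact hinjJ (i0 - 1) (J - 1) (by omega) (by omega) hc.symm
    · rcases Nat.lt_or_ge (i0 + 1) (J - 1) with hlt | hge
      · exact hinjJ (i0 + 1) (J - 1) hlt (by omega) hc.symm
      · have hJe : J = i0 + 2 := by omega
        exact hne2 i0 (by rw [← hJe, ← hfi0])
  subst hi00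
  have hJ3 : 3 ≤ J := by
    by_contra hcon
    push_neg at hcon
    have h1 : J = 1 ∨ J = 2 := by omega
    rcases h1 with h1 | h1
    · rw [h1] at hfi0
      exact (G.ne_of_adj (hadj' 0)) hfi0
    · rw [h1] at hfi0
      exact hne2 0 hfi0.symm
  -- closure under adjacency
  have hf0J : f J = f 0 := hfi0.symm
  have hSclosed : ∀ a b, G.Adj a b → (∃ k, k < J ∧ f k = a) → (∃ k, k < J ∧ f k = b) := by
    rintro a b hab ⟨k, hkJ, rfl⟩
    rcases Nat.eq_zero_or_pos k with rfl | hk1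
    · have hA1 : G.Adj (f 0) (f (J-1)) := by
        have := (hadj' (J-1)).symm
        rw [show J - 1 + 1 = J by omega, hf0J] at this
        exact this
      have hd : f 1 ≠ f (J - 1) := hinjJ 1 (J-1) (by omega) (by omega)
      rcases deg2_unique (hdeg (f 0)) (hadj' 0) hA1 hab hd with hc | hc
      · exact ⟨1, by omega, hc.symm⟩
      · exact ⟨J - 1, by omega, hc.symm⟩
    · have hA2 : G.Adj (f k) (f (k - 1)) := by
        have := (hadj' (k-1)).symm
        rw [show k - 1 + 1 = k by omega] at this
        exact this
      have hd : f (k - 1) ≠ f (k + 1) := by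
        have := hne2 (k - 1)
        rw [show k - 1 + 2 = k + 1 by omega] at this
        exact fun hh => this hh.symm
      rcases deg2_unique (hdeg (f k)) hA2 (hadj' k) hab hd with hc | hc
      · exact ⟨k - 1, by omega, hc.symm⟩
      · rcases Nat.lt_or_ge (k+1) J with h | h
        · exact ⟨k + 1, h, hc.symm⟩
        · have : k + 1 = J := by omega
          exact ⟨0, by omega, by rw [← hf0J, ← this, hc]⟩
  have hall : ∀ (a b : W), G.Walk a b → (∃ k, k < J ∧ f k = a) → (∃ k, k < J ∧ f k = b) := by
    intro a b wk
    induction wk with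
    | nil => exact id
    | cons h _ ih => exact fun ha => ih (hSclosed _ _ h ha)
  have hsurj : ∀ w : W, ∃ k, k < J ∧ f k = w := by
    intro w
    exact (hconn.preconnected (f 0) w).elim
      (fun wk => hall _ _ wk ⟨0, by omega, rfl⟩)
  -- J = m
  have hJm : J = m := by
    have hSset : f '' (Set.Iio J) = Set.univ := by
      apply Set.eq_univ_of_forall
      intro w
      obtain ⟨k, hk, hfk⟩ := hsurj w
      exact ⟨k, hk, hfk⟩
    have hinj : Set.InjOn f (Set.Iio J) := by
      intro a ha b hb hab
      rcases Nat.lt_trichotomy a b with h | h | h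
      · exact absurd hab (hinjJ a b h hb)
      · exact h
      · exact absurd hab.symm (hinjJ b a h ha)
    have h1 : (f '' (Set.Iio J)).ncard = J := by
      rw [Set.ncard_image_of_injOn hinj]
      rw [show (Set.Iio J) = ↑(Finset.Iio J) by simp, Set.ncard_coe_finset]
      simp
    rw [hSset, Set.ncard_univ] at h1
    omega
  -- the equivalence
  have hebij : Function.Bijective (fun x : ZMod m => f x.val) := by
    constructor
    · intro x y hxy
      have hx : x.val < J := by rw [hJm]; exact ZMod.val_lt x
      have hy : y.val < J := by rw [hJm]; exact ZMod.val_lt y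
      have : x.val = y.val := by
        rcases Nat.lt_trichotomy x.val y.val with h | h | h
        · exact absurd hxy (hinjJ _ _ h hy)
        · exact h
        · exact absurd hxy.symm (hinjJ _ _ h hx)
      have e1 : ((x.val : ℕ) : ZMod m) = x := by simp [ZMod.natCast_val, ZMod.cast_id]
      have e2 : ((y.val : ℕ) : ZMod m) = y := by simp [ZMod.natCast_val, ZMod.cast_id]
      rw [← e1, ← e2, this]
    · intro w
      obtain ⟨k, hk, hfk⟩ := hsurj w
      refine ⟨(k : ZMod m), ?_⟩
      simp only
      rw [ZMod.val_cast_of_lt (by omega : k < m)]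
      exact hfk
  set e : ZMod m ≃ W := Equiv.ofBijective _ hebij with hedef
  have heapp : ∀ x : ZMod m, e x = f x.val := fun x => rfl
  have hkey : ∀ x : ZMod m, G.Adj (e x) (e (x + 1)) := by
    intro x
    rw [heapp, heapp]
    have hv : (x + 1).val = (x.val + 1) % m := by
      rw [ZMod.val_add, ZMod.val_one]
    rcases Nat.lt_or_ge (x.val + 1) m with h | h
    · rw [hv, Nat.mod_eq_of_lt h]
      exact hadj' x.val
    · have hxm : x.val = m - 1 := by have := ZMod.val_lt x; omega
      have hv0 : (x + 1).val = 0 := by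
        rw [hv, hxm, Nat.sub_add_cancel (by omega : 1 ≤ m)]
        simp
      rw [hv0, hxm, ← hJm]
      have := hadj' (J - 1)
      rw [Nat.sub_add_cancel (by omega : 1 ≤ J), hf0J] at this
      exact this
  refine ⟨e, fun x y => ⟨?_, ?_⟩⟩
  · intro hxy
    have hA1 : G.Adj (e x) (e (x + 1)) := hkey x
    have hA2 : G.Adj (e x) (e (x - 1)) := by
      have := (hkey (x - 1)).symm
      rw [sub_add_cancel] at this
      exact this
    have hd : e (x + 1) ≠ e (x - 1) := by
      intro hh
      have := e.injective hh
      have h2 : (2 : ZMod m) = 0 := by linear_combination this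
      exact two_ne_zero_zmod (by omega) h2
    rcases deg2_unique (hdeg (e x)) hA1 hA2 hxy hd with hc | hc
    · exact Or.inl (e.injective hc)
    · right
      have := e.injective hc
      rw [this]
      ring
  · rintro (rfl | rfl)
    · exact hkey x
    · have := (hkey y).symm
      exact this


lemma affine_classify {m : ℕ} (hm : 3 ≤ m) (σ : Equiv.Perm (ZMod m))
    (h : ∀ x, σ (x + 1) = σ x + 1 ∨ σ (x + 1) = σ x - 1) :
    (∀ x, σ x = σ 0 + x) ∨ (∀ x, σ x = σ 0 - x) := by
  haveI : NeZero m := ⟨by omega⟩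
  have h2 : (2 : ZMod m) ≠ 0 := two_ne_zero_zmod hm
  have stepP : ∀ x, σ (x + 1) = σ x + 1 → σ (x + 1 + 1) = σ (x + 1) + 1 := by
    intro x hx
    rcases h (x + 1) with h' | h'
    · exact h'
    · exfalso
      have : σ (x + 1 + 1) = σ x := by rw [h', hx]; ring
      have := σ.injective this
      apply h2
      linear_combination this
  have stepM : ∀ x, σ (x + 1) = σ x - 1 → σ (x + 1 + 1) = σ (x + 1) - 1 := by
    intro x hx
    rcases h (x + 1) with h' | h'
    · exfalso
      have : σ (x + 1 + 1) = σ x := by rw [h', hx]; ring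
      have := σ.injective this
      apply h2
      linear_combination this
    · exact h'
  have hcast : ∀ x : ZMod m, ((x.val : ℕ) : ZMod m) = x := by
    intro x; simp [ZMod.natCast_val, ZMod.cast_id]
  rcases h 0 with h0 | h0
  · left
    have hA : ∀ n : ℕ, σ ((n : ZMod m) + 1) = σ (n : ZMod m) + 1 := by
      intro n
      induction n with
      | zero => simpa using h0
      | succ k ih => push_cast; push_cast at ih; exact stepP _ ih
    have hA' : ∀ x : ZMod m, σ (x + 1) = σ x + 1 := by
      intro x; rw [← hcast x]; exact hA x.val
    have hB : ∀ n : ℕ, σ (n : ZMod m) = σ 0 + n := by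
      intro n
      induction n with
      | zero => simp
      | succ k ih => push_cast; push_cast at ih; rw [hA' k, ih]; ring
    intro x; rw [← hcast x]; exact hB x.val
  · right
    have hA : ∀ n : ℕ, σ ((n : ZMod m) + 1) = σ (n : ZMod m) - 1 := by
      intro n
      induction n with
      | zero => simpa using h0
      | succ k ih => push_cast; push_cast at ih; exact stepM _ ih
    have hA' : ∀ x : ZMod m, σ (x + 1) = σ x - 1 := by
      intro x; rw [← hcast x]; exact hA x.val
    have hB : ∀ n : ℕ, σ (n : ZMod m) = σ 0 - n := by
      intro n
      induction n with
      | zero => simp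
      | succ k ih => push_cast; push_cast at ih; rw [hA' k, ih]; ring
    intro x; rw [← hcast x]; exact hB x.val


def dihedralHom (m : ℕ) : DihedralGroup m →* Equiv.Perm (ZMod m) where
  toFun := fun g => match g with
    | DihedralGroup.r i => Equiv.subRight i
    | DihedralGroup.sr i => Function.Involutive.toPerm (fun x => i - x) (fun x => sub_sub_cancel i x)
  map_one' := by
    rw [DihedralGroup.one_def]
    ext x
    simp [Equiv.subRight]
  map_mul' := by
    rintro (i | i) (j | j) <;> ext x <;>
      simp [DihedralGroup.r_mul_r, DihedralGroup.r_mul_sr, DihedralGroup.sr_mul_r,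
        DihedralGroup.sr_mul_sr, Equiv.subRight, Function.Involutive.toPerm, Equiv.Perm.mul_apply] <;>
      ring

@[simp] lemma dihedralHom_r (m : ℕ) (i : ZMod m) (x : ZMod m) :
    dihedralHom m (DihedralGroup.r i) x = x - i := rfl

@[simp] lemma dihedralHom_sr (m : ℕ) (i : ZMod m) (x : ZMod m) :
    dihedralHom m (DihedralGroup.sr i) x = i - x := rfl

lemma dihedralHom_injective {m : ℕ} (hm : 3 ≤ m) : Function.Injective (dihedralHom m) := by
  rw [injective_iff_map_eq_one]
  rintro (i | i) h
  · have h0 := congrArg (fun σ : Equiv.Perm (ZMod m) => σ 0) h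
    simp at h0
    rw [DihedralGroup.one_def, h0]
  · exfalso
    have h0 := congrArg (fun σ : Equiv.Perm (ZMod m) => σ 0) h
    have h1 := congrArg (fun σ : Equiv.Perm (ZMod m) => σ 1) h
    simp at h0 h1
    apply two_ne_zero_zmod hm
    rw [h0] at h1
    linear_combination -h1

/-- Proposition: quotient group is dihedral. -/
theorem statement0 {V : Type*} [Fintype V] (Γ H : SimpleGraph V)
    (hconn : Γ.Connected) (hcubic : IsCubic Γ) (hpart : FactorPartition Γ H)
    (hm3 : 3 ≤ Nat.card H.ConnectedComponent)
    (hquot : IsCycleGraph (quotientGraph Γ H))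
    (G : Subgroup (Equiv.Perm V))
    (hGaut : ∀ g ∈ G, IsAut Γ g)
    (hGpres : ∀ g ∈ G, Preserves H g)
    (hGtrans : ∀ u v : V, ∃ g ∈ G, g u = v) :
    ∃ Q : Subgroup (Equiv.Perm H.ConnectedComponent),
      (Q : Set (Equiv.Perm H.ConnectedComponent)) =
        {σ : Equiv.Perm H.ConnectedComponent |
          ∃ g ∈ G, ∀ v : V, σ (H.connectedComponentMk v) = H.connectedComponentMk (g v)} ∧
      Nonempty (Q ≃* DihedralGroup (Nat.card H.ConnectedComponent)) := by
  classical
  haveI : Finite H.ConnectedComponent :=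
    Finite.of_surjective H.connectedComponentMk (fun c => c.exists_rep)
  set m := Nat.card H.ConnectedComponent with hmdef
  haveI : NeZero m := ⟨by omega⟩
  haveI : Fact (1 < m) := ⟨by omega⟩
  obtain ⟨e, he⟩ := cycle_labeling (quotientGraph Γ H) hquot hm3
  -- arithmetic facts in ZMod m
  have h2z : (2 : ZMod m) ≠ 0 := two_ne_zero_zmod hm3
  have h01 : (0 : ZMod m) ≠ 1 := fun h => one_ne_zero h.symm
  have h0m : (0 : ZMod m) ≠ -1 := fun h => h01 (by linear_combination -h)
  have h1m : (1 : ZMod m) ≠ -1 := fun h => h2z (by linear_combination h)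
  -- the subgroup Q
  let Q : Subgroup (Equiv.Perm H.ConnectedComponent) :=
    { carrier := {σ : Equiv.Perm H.ConnectedComponent |
        ∃ g ∈ G, ∀ v : V, σ (H.connectedComponentMk v) = H.connectedComponentMk (g v)}
      one_mem' := ⟨1, G.one_mem, fun v => by simp⟩
      mul_mem' := by
        rintro σ τ ⟨g, hg, hgp⟩ ⟨g', hg', hgp'⟩
        refine ⟨g * g', G.mul_mem hg hg', fun v => ?_⟩
        rw [Equiv.Perm.mul_apply, hgp', hgp, Equiv.Perm.mul_apply]
      inv_mem' := by
        rintro σ ⟨g, hg, hgp⟩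
        refine ⟨g⁻¹, G.inv_mem hg, fun v => ?_⟩
        apply σ.injective
        rw [show σ (σ⁻¹ (H.connectedComponentMk v)) = H.connectedComponentMk v from σ.apply_symm_apply _, hgp]
        simp }
  refine ⟨Q, rfl, ?_⟩
  -- the induced permutation of a group element
  have exists_sigma : ∀ g ∈ G, ∃ σ : Equiv.Perm H.ConnectedComponent,
      ∀ v : V, σ (H.connectedComponentMk v) = H.connectedComponentMk (g v) := by
    intro g hg
    let φg : H →g H := ⟨g, fun h => hGpres g hg _ _ h⟩
    let φg' : H →g H := ⟨(g⁻¹ : Equiv.Perm V), fun h => hGpres g⁻¹ (G.inv_mem hg) _ _ h⟩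
    refine ⟨⟨SimpleGraph.ConnectedComponent.map φg, SimpleGraph.ConnectedComponent.map φg',
      ?_, ?_⟩, fun v => SimpleGraph.ConnectedComponent.map_mk _ _⟩
    · intro c
      refine SimpleGraph.ConnectedComponent.ind (fun v => ?_) c
      rw [SimpleGraph.ConnectedComponent.map_mk, SimpleGraph.ConnectedComponent.map_mk]
      exact congrArg H.connectedComponentMk (g.symm_apply_apply v)
    · intro c
      refine SimpleGraph.ConnectedComponent.ind (fun v => ?_) c
      rw [SimpleGraph.ConnectedComponent.map_mk, SimpleGraph.ConnectedComponent.map_mk]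
      exact congrArg H.connectedComponentMk (g.apply_symm_apply v)
  -- members of Q preserve quotient adjacency
  have qadj : ∀ σ, σ ∈ Q → ∀ c d, (quotientGraph Γ H).Adj c d →
      (quotientGraph Γ H).Adj (σ c) (σ d) := by
    rintro σ ⟨g, hg, hgp⟩ c d hcd
    rw [quotientGraph, SimpleGraph.fromRel_adj] at hcd ⊢
    obtain ⟨hne, hrel⟩ := hcd
    refine ⟨fun hh => hne (σ.injective hh), ?_⟩
    rcases hrel with ⟨u, v, huv, hu, hv⟩ | ⟨u, v, huv, hu, hv⟩
    · exact Or.inl ⟨g u, g v, (hGaut g hg u v).mpr huv, by rw [← hgp, hu], by rw [← hgp, hv]⟩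
    · exact Or.inr ⟨g u, g v, (hGaut g hg u v).mpr huv, by rw [← hgp, hu], by rw [← hgp, hv]⟩
  -- extracting witnesses from quotient adjacency
  have extract : ∀ c d, (quotientGraph Γ H).Adj c d →
      ∃ u v : V, Γ.Adj u v ∧ H.connectedComponentMk u = c ∧ H.connectedComponentMk v = d := by
    intro c d hcd
    rw [quotientGraph, SimpleGraph.fromRel_adj] at hcd
    obtain ⟨hne, h | h⟩ := hcd
    · exact h
    · obtain ⟨u, v, huv, hu, hv⟩ := h
      exact ⟨v, u, huv.symm, hv, hu⟩
  have hnH : ∀ u v : V, H.connectedComponentMk u ≠ H.connectedComponentMk v → ¬ H.Adj u v :=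
    fun u v hne hH => hne (SimpleGraph.ConnectedComponent.eq.mpr hH.reachable)
  -- transitivity on components
  have htrans' : ∀ a : ZMod m, ∃ σ ∈ Q, σ (e 0) = e a := by
    intro a
    obtain ⟨u, hu⟩ := (e (0 : ZMod m)).exists_rep
    obtain ⟨w, hw⟩ := (e a).exists_rep
    have hu' : H.connectedComponentMk u = e 0 := hu
    have hw' : H.connectedComponentMk w = e a := hw
    obtain ⟨g, hg, hgu⟩ := hGtrans u w
    obtain ⟨σ, hσ⟩ := exists_sigma g hg
    exact ⟨σ, ⟨g, hg, hσ⟩, by rw [← hu', hσ, hgu, hw']⟩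
  -- affine classification of members of Q
  have affQ : ∀ σ, σ ∈ Q →
      (∀ x : ZMod m, e.symm (σ (e x)) = e.symm (σ (e 0)) + x) ∨
      (∀ x : ZMod m, e.symm (σ (e x)) = e.symm (σ (e 0)) - x) := by
    intro σ hσ
    let π : Equiv.Perm (ZMod m) := e.permCongr.symm σ
    have hπ : ∀ x, π x = e.symm (σ (e x)) := by
      intro x
      simp [π, Equiv.permCongr_symm, Equiv.permCongr_apply]
    have hkey : ∀ x, π (x + 1) = π x + 1 ∨ π (x + 1) = π x - 1 := by
      intro x
      have hA : (quotientGraph Γ H).Adj (e x) (e (x + 1)) := (he x (x + 1)).mpr (Or.inl rfl)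
      have hB := qadj σ hσ _ _ hA
      have hB' : (quotientGraph Γ H).Adj (e (π x)) (e (π (x + 1))) := by
        rw [hπ, hπ]
        simpa using hB
      rcases (he _ _).mp hB' with h | h
      · exact Or.inl h
      · exact Or.inr (by linear_combination -h)
    rcases affine_classify hm3 π hkey with h | h
    · left
      intro x
      rw [← hπ x, ← hπ 0]
      exact h x
    · right
      intro x
      rw [← hπ x, ← hπ 0]
      exact h x
  -- the reflection: an element of Q acting as negation
  have hnegτ : ∃ τ ∈ Q, ∀ c, τ c = e (-(e.symm c)) := by
    have hadj01 : (quotientGraph Γ H).Adj (e 0) (e 1) :=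
      (he 0 1).mpr (Or.inl (zero_add 1).symm)
    have hadj0m : (quotientGraph Γ H).Adj (e 0) (e (-1)) :=
      (he 0 (-1)).mpr (Or.inr (by ring))
    obtain ⟨u₁, v₁, hA1, hu1, hv1⟩ := extract _ _ hadj01
    obtain ⟨u₂, v₂, hA2, hu2, hv2⟩ := extract _ _ hadj0m
    have hnH1 : ¬ H.Adj u₁ v₁ := by
      apply hnH
      rw [hu1, hv1]
      exact fun hh => h01 (e.injective hh)
    have hnH2 : ¬ H.Adj u₂ v₂ := by
      apply hnH
      rw [hu2, hv2]
      exact fun hh => h0m (e.injective hh)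
    obtain ⟨g, hg, hgu⟩ := hGtrans u₁ u₂
    obtain ⟨σ, hσ⟩ := exists_sigma g hg
    have hσQ : σ ∈ Q := ⟨g, hg, hσ⟩
    -- g maps v₁ to v₂
    have hgv : g v₁ = v₂ := by
      have hAdj : Γ.Adj u₂ (g v₁) := by
        have := (hGaut g hg u₁ v₁).mpr hA1
        rwa [hgu] at this
      have hnHg : ¬ H.Adj u₂ (g v₁) := by
        intro hH
        have := hGpres g⁻¹ (G.inv_mem hg) _ _ hH
        rw [← hgu] at this
        simp only [Equiv.Perm.coe_inv, Equiv.symm_apply_apply] at this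
        exact hnH1 this
      obtain ⟨a, ha⟩ := Set.ncard_eq_one.mp (hpart.2.2 u₂)
      have m1 : g v₁ ∈ {w : V | Γ.Adj u₂ w ∧ ¬ H.Adj u₂ w} := ⟨hAdj, hnHg⟩
      have m2 : v₂ ∈ {w : V | Γ.Adj u₂ w ∧ ¬ H.Adj u₂ w} := ⟨hA2, hnH2⟩
      rw [ha] at m1 m2
      rw [Set.mem_singleton_iff] at m1 m2
      rw [m1, m2]
    have hτ0 : σ (e 0) = e 0 := by rw [← hu1, hσ, hgu, hu2]; exact hu1.symm
    have hτ1 : σ (e 1) = e (-1) := by rw [← hv1, hσ, hgv, hv2]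
    refine ⟨σ, hσQ, ?_⟩
    have h0 : e.symm (σ (e 0)) = 0 := by rw [hτ0, Equiv.symm_apply_apply]
    rcases affQ σ hσQ with h | h
    · exfalso
      have := h 1
      rw [hτ1, Equiv.symm_apply_apply, h0, zero_add] at this
      exact h1m this.symm
    · intro c
      have := h (e.symm c)
      rw [Equiv.apply_symm_apply, h0, zero_sub] at this
      rw [← this, Equiv.apply_symm_apply]
  -- normalized elements: rotations
  have hplusN : ∀ a : ZMod m, ∃ σ ∈ Q, ∀ c, σ c = e (a + e.symm c) := by
    intro a
    obtain ⟨σ, hσQ, hσ0⟩ := htrans' a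
    have ha0 : e.symm (σ (e 0)) = a := by rw [hσ0, Equiv.symm_apply_apply]
    obtain ⟨τ, hτQ, hτ⟩ := hnegτ
    rcases affQ σ hσQ with h | h
    · refine ⟨σ, hσQ, fun c => ?_⟩
      have := h (e.symm c)
      rw [Equiv.apply_symm_apply, ha0] at this
      rw [← this, Equiv.apply_symm_apply]
    · refine ⟨σ * τ, Q.mul_mem hσQ hτQ, fun c => ?_⟩
      rw [Equiv.Perm.mul_apply, hτ]
      have := h (e.symm (e (-(e.symm c))))
      rw [Equiv.apply_symm_apply, ha0, Equiv.symm_apply_apply] at this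
      have h2 : σ (e (-(e.symm c))) = e (a - -(e.symm c)) := by
        rw [← this, Equiv.apply_symm_apply]
      rw [h2]
      exact congrArg e (by ring)
  -- normalized elements: reflections
  have hminusN : ∀ a : ZMod m, ∃ σ ∈ Q, ∀ c, σ c = e (a - e.symm c) := by
    intro a
    obtain ⟨σ, hσQ, hσ⟩ := hplusN a
    obtain ⟨τ, hτQ, hτ⟩ := hnegτ
    refine ⟨σ * τ, Q.mul_mem hσQ hτQ, fun c => ?_⟩
    rw [Equiv.Perm.mul_apply, hτ, hσ, Equiv.symm_apply_apply]
    exact congrArg e (by ring)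
  -- the dihedral homomorphism into Perm of components
  let conj : Equiv.Perm (ZMod m) →* Equiv.Perm H.ConnectedComponent :=
    { toFun := fun π => e.permCongr π
      map_one' := by ext c; simp
      map_mul' := by
        intro a b
        ext c
        simp [Equiv.permCongr_apply, Equiv.Perm.mul_apply] }
  let Φ : DihedralGroup m →* Equiv.Perm H.ConnectedComponent := conj.comp (dihedralHom m)
  have hΦapp : ∀ d : DihedralGroup m, ∀ c,
      Φ d c = e (dihedralHom m d (e.symm c)) := by
    intro d c
    simp [Φ, conj, Equiv.permCongr_apply]
  have hΦinj : Function.Injective Φ := by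
    have h1 : Function.Injective conj := fun a b hab => e.permCongr.injective hab
    exact h1.comp (dihedralHom_injective hm3)
  have hrange : Φ.range = Q := by
    ext σ
    constructor
    · rintro ⟨d, rfl⟩
      cases d with
      | r i =>
        obtain ⟨σ', hσ'Q, hσ'⟩ := hplusN (-i)
        have hEq : Φ (DihedralGroup.r i) = σ' := by
          apply Equiv.ext; intro c
          rw [hσ', hΦapp, dihedralHom_r]
          exact congrArg e (by ring)
        rw [hEq]
        exact hσ'Q
      | sr i =>
        obtain ⟨σ', hσ'Q, hσ'⟩ := hminusN i
        have hEq : Φ (DihedralGroup.sr i) = σ' := by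
          apply Equiv.ext; intro c
          rw [hσ', hΦapp, dihedralHom_sr]
        rw [hEq]
        exact hσ'Q
    · intro hσ
      rcases affQ σ hσ with h | h
      · refine ⟨DihedralGroup.r (-(e.symm (σ (e 0)))), ?_⟩
        apply Equiv.ext; intro c
        rw [hΦapp, dihedralHom_r]
        have h2 := h (e.symm c)
        rw [Equiv.apply_symm_apply] at h2
        have h3 : σ c = e (e.symm (σ (e 0)) + e.symm c) := by
          rw [← h2, Equiv.apply_symm_apply]
        rw [h3]
        exact congrArg e (by ring)
      · refine ⟨DihedralGroup.sr (e.symm (σ (e 0))), ?_⟩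
        apply Equiv.ext; intro c
        rw [hΦapp, dihedralHom_sr]
        have h2 := h (e.symm c)
        rw [Equiv.apply_symm_apply] at h2
        have h3 : σ c = e (e.symm (σ (e 0)) - e.symm c) := by
          rw [← h2, Equiv.apply_symm_apply]
        rw [h3]
  exact ⟨((MonoidHom.ofInjective hΦinj).trans (MulEquiv.subgroupCongr hrange)).symm⟩

end CubicFIG
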